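/- For every positive integer n, ∑_{k=1}^n (−1)^{n−k} (4k^2+2k−1) D_{k−1} s_k = n · ((n+1) D_n s_n + (n+2) D_{n−1} s_{n+1})/3. -/

import Mathlib

def D (n : ℕ) : ℤ :=
  ∑ k ∈ Finset.range (n + 1), (n.choose k : ℤ) * ((n + k).choose k : ℤ)
def littleSchroeder (n : ℕ) : ℤ :=
  ∑ k ∈ Finset.Icc 1 n, ((n.choose k * n.choose (k - 1) / n * 2 ^ (n - k) : ℕ) : ℤ)

/-! ### Basic binomial relations over ℤ -/

lemma RA (n k : ℕ) : ((n : ℤ) + 1 - (k : ℤ)) * ((n + 1).choose k : ℤ)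
    = ((n : ℤ) + 1) * (n.choose k : ℤ) := by
  rcases le_or_gt k (n + 1) with h | h
  · have h1 := Nat.choose_mul_succ_eq n k
    have h2 : ((n + 1 - k : ℕ) : ℤ) = (n : ℤ) + 1 - k := by
      rw [Nat.cast_sub h]; push_cast; ring
    have h3 : ((n.choose k : ℤ)) * ((n : ℤ) + 1) = ((n + 1).choose k : ℤ) * ((n : ℤ) + 1 - k) := by
      rw [← h2]; exact_mod_cast congrArg (Nat.cast (R := ℤ)) h1
    linear_combination -h3
  · have e1 : (n + 1).choose k = 0 := Nat.choose_eq_zero_of_lt h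
    have e2 : n.choose k = 0 := Nat.choose_eq_zero_of_lt (by omega)
    rw [e1, e2]; simp

lemma RC (n k : ℕ) : ((k : ℤ) + 1) * ((n + 1).choose (k + 1) : ℤ)
    = ((n : ℤ) + 1) * (n.choose k : ℤ) := by
  have h : (n + 1) * n.choose k = (n + 1).choose (k + 1) * (k + 1) := Nat.add_one_mul_choose_eq n k
  have h' : ((n : ℤ) + 1) * (n.choose k : ℤ) = ((n + 1).choose (k + 1) : ℤ) * ((k : ℤ) + 1) := by
    exact_mod_cast congrArg (Nat.cast (R := ℤ)) h
  linear_combination -h'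

lemma RB (n k : ℕ) : ((k : ℤ) + 1) * (n.choose (k + 1) : ℤ)
    = ((n : ℤ) - k) * (n.choose k : ℤ) := by
  have h1 := RC n k
  have h2 : ((n + 1).choose (k + 1) : ℤ) = (n.choose k : ℤ) + (n.choose (k + 1) : ℤ) := by
    exact_mod_cast congrArg (Nat.cast (R := ℤ)) (Nat.choose_succ_succ n k)
  linear_combination h1 - ((k : ℤ) + 1) * h2

/-! ### Narayana divisibility and n·s(n) = Tz n -/

lemma nara_dvd (m i : ℕ) : (m + 1) ∣ (m + 1).choose (i + 1) * (m + 1).choose i := by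
  cases i with
  | zero => exact ⟨1, by simp [Nat.choose_one_right]⟩
  | succ i =>
    have h1 := RC m i
    have h2 := RC m (i + 1)
    push_cast at h2
    have hne : (((i : ℤ) + 1) * ((i : ℤ) + 2)) ≠ 0 := by positivity
    have big : (((i : ℤ) + 1) * ((i : ℤ) + 2)) * (((m + 1).choose (i + 2) : ℤ) * ((m + 1).choose (i + 1) : ℤ))
        = (((i : ℤ) + 1) * ((i : ℤ) + 2)) * (((m : ℤ) + 1) * (((m + 1).choose (i + 1) : ℤ) * (m.choose (i + 1) : ℤ)
            - ((m + 1).choose (i + 2) : ℤ) * (m.choose i : ℤ))) := by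
      linear_combination (-(((i : ℤ) + 1) * ((i : ℤ) + 2)) * ((m + 1).choose (i + 2) : ℤ)) * h1
        + ((((i : ℤ) + 1) * ((i : ℤ) + 2)) * ((m + 1).choose (i + 1) : ℤ)) * h2
    have key := mul_left_cancel₀ hne big
    have : ((m + 1 : ℕ) : ℤ) ∣ (((m + 1).choose (i + 2) * (m + 1).choose (i + 1) : ℕ) : ℤ) := by
      push_cast
      exact Dvd.intro _ key.symm
    exact_mod_cast this

def Tz (n : ℕ) : ℤ :=
  ∑ j ∈ Finset.range n, ((n.choose (j + 1) * n.choose j * 2 ^ (n - 1 - j) : ℕ) : ℤ)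

lemma schroeder_mul (n : ℕ) : (n : ℤ) * littleSchroeder n = Tz n := by
  cases n with
  | zero => simp [littleSchroeder, Tz]
  | succ m =>
    unfold littleSchroeder Tz
    rw [Finset.mul_sum, ← Finset.Ico_add_one_right_eq_Icc, Finset.sum_Ico_eq_sum_range]
    have hrange : m + 1 + 1 - 1 = m + 1 := by omega
    rw [hrange]
    apply Finset.sum_congr rfl
    intro j hj
    have e1 : 1 + j = j + 1 := by omega
    rw [e1]
    have e2 : j + 1 - 1 = j := by omega
    rw [e2]
    have e3 : m + 1 - (j + 1) = m + 1 - 1 - j := by omega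
    rw [e3]
    rw [← Nat.cast_mul]
    congr 1
    rw [← mul_assoc, Nat.mul_div_cancel' (nara_dvd m j)]

/-! ### Delannoy recurrence via WZ certificate -/

def gD (n k : ℕ) : ℤ :=
  2 * (2 * (n : ℤ) + 3) * (k : ℤ) ^ 2 * ((n + 2).choose k : ℤ) * ((n + k).choose k : ℤ)

lemma delannoy_key (nn kk a0 a1 a2 a2p b0 b1 b1p b2 : ℤ)
    (h1 : (nn + 1 - kk) * a1 = (nn + 1) * a0)
    (h2 : (nn + 2 - kk) * a2 = (nn + 2) * a1)
    (h3 : (kk + 1) * a2p = (nn + 2 - kk) * a2)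
    (h4 : (nn + 1) * b1 = (nn + kk + 1) * b0)
    (h5 : (nn + 2) * b2 = (nn + kk + 2) * b1)
    (h6 : (kk + 1) * b1p = (nn + kk + 1) * b0) :
    (nn + 1) * (nn + 2) * ((nn + 2) * (a2 * b2) - 3 * (2 * nn + 3) * (a1 * b1) + (nn + 1) * (a0 * b0))
      = 2 * (2 * nn + 3) * (kk ^ 2 * (a2 * b0)) - 2 * (2 * nn + 3) * ((kk + 1) ^ 2 * (a2p * b1p)) := by
  linear_combination (-(nn + 1) * (nn + 2) * b0) * h1
    + ((nn + 1) * (kk - nn - 1) * b0 + 3 * (nn + 1) * (2 * nn + 3) * b1) * h2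
    + ((-1 + kk + 2 * kk ^ 2 - 2 * nn + kk * nn - nn ^ 2) * b0
        + (9 + kk + kk ^ 2 + 15 * nn + 6 * nn ^ 2) * b1
        + (-2 - 2 * kk - 3 * nn - kk * nn - nn ^ 2) * b2) * h3
    + (2 * kk ^ 2 * a2 + (2 * kk ^ 2 - 7 - 5 * kk - 5 * nn - 5 * kk * nn) * a2p) * h4
    + ((kk ^ 2 - kk) * a2 + (1 + 2 * kk + kk ^ 2 + nn + kk * nn) * a2p) * h5
    + ((6 + 6 * kk + 4 * nn + 4 * kk * nn) * a2p) * h6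

lemma Drec (n : ℕ) : ((n : ℤ) + 2) * D (n + 2)
    = 3 * (2 * (n : ℤ) + 3) * D (n + 1) - ((n : ℤ) + 1) * D n := by
  have key : ∀ k : ℕ,
      ((n : ℤ) + 1) * ((n : ℤ) + 2) * ((n : ℤ) + 2) * (((n + 2).choose k : ℤ) * ((n + k + 2).choose k : ℤ))
        + (-(3 * (((n : ℤ)) + 1) * ((n : ℤ) + 2) * (2 * (n : ℤ) + 3))) * (((n + 1).choose k : ℤ) * ((n + k + 1).choose k : ℤ))
        + (((n : ℤ) + 1) * ((n : ℤ) + 2) * ((n : ℤ) + 1)) * ((n.choose k : ℤ) * ((n + k).choose k : ℤ))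
      = gD n k - gD n (k + 1) := by
    intro k
    have h1 := RA n k
    have h2 := RA (n + 1) k
    have h3 := RB (n + 2) k
    have h4 := RA (n + k) k
    have h5 := RA (n + k + 1) k
    have h6 := RC (n + k) k
    push_cast at h1 h2 h3 h4 h5 h6
    have e1 : n + 1 + 1 = n + 2 := by omega
    rw [e1] at h2
    have e2 : n + k + 1 + 1 = n + k + 2 := by omega
    rw [e2] at h5
    have main := delannoy_key (n : ℤ) (k : ℤ)
      (n.choose k : ℤ) ((n + 1).choose k : ℤ) ((n + 2).choose k : ℤ) ((n + 2).choose (k + 1) : ℤ)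
      ((n + k).choose k : ℤ) ((n + k + 1).choose k : ℤ) ((n + k + 1).choose (k + 1) : ℤ)
      ((n + k + 2).choose k : ℤ)
      (by linear_combination h1) (by linear_combination h2) (by linear_combination h3)
      (by linear_combination h4) (by linear_combination h5) (by linear_combination h6)
    unfold gD
    have e3 : n + (k + 1) = n + k + 1 := by omega
    rw [e3]
    push_cast
    linear_combination main
  have tele := Finset.sum_range_sub' (gD n) (n + 3)
  have sum_eq : ∑ k ∈ Finset.range (n + 3),
      (((n : ℤ) + 1) * ((n : ℤ) + 2) * ((n : ℤ) + 2) * (((n + 2).choose k : ℤ) * ((n + k + 2).choose k : ℤ))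
        + (-(3 * (((n : ℤ)) + 1) * ((n : ℤ) + 2) * (2 * (n : ℤ) + 3))) * (((n + 1).choose k : ℤ) * ((n + k + 1).choose k : ℤ))
        + (((n : ℤ) + 1) * ((n : ℤ) + 2) * ((n : ℤ) + 1)) * ((n.choose k : ℤ) * ((n + k).choose k : ℤ)))
      = gD n 0 - gD n (n + 3) := by
    rw [Finset.sum_congr rfl (fun k _ => key k)]
    exact tele
  have g0 : gD n 0 = 0 := by simp [gD]
  have gtop : gD n (n + 3) = 0 := by
    have : (n + 2).choose (n + 3) = 0 := Nat.choose_eq_zero_of_lt (by omega)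
    simp [gD, this]
  rw [g0, gtop, sub_zero] at sum_eq
  rw [Finset.sum_add_distrib, Finset.sum_add_distrib, ← Finset.mul_sum, ← Finset.mul_sum,
    ← Finset.mul_sum] at sum_eq
  have c2 : ∑ k ∈ Finset.range (n + 3), (((n + 2).choose k : ℤ) * ((n + k + 2).choose k : ℤ)) = D (n + 2) := by
    unfold D
    apply Finset.sum_congr rfl
    intro k _
    have : n + 2 + k = n + k + 2 := by omega
    rw [this]
  have c1 : ∑ k ∈ Finset.range (n + 3), (((n + 1).choose k : ℤ) * ((n + k + 1).choose k : ℤ)) = D (n + 1) := by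
    rw [Finset.sum_range_succ]
    have hz : (n + 1).choose (n + 2) = 0 := Nat.choose_eq_zero_of_lt (by omega)
    rw [hz]
    unfold D
    simp only [Nat.cast_zero, zero_mul, add_zero]
    apply Finset.sum_congr rfl
    intro k _
    have : n + 1 + k = n + k + 1 := by omega
    rw [this]
  have c0 : ∑ k ∈ Finset.range (n + 3), ((n.choose k : ℤ) * ((n + k).choose k : ℤ)) = D n := by
    rw [Finset.sum_range_succ, Finset.sum_range_succ]
    have hz1 : n.choose (n + 1) = 0 := Nat.choose_eq_zero_of_lt (by omega)
    have hz2 : n.choose (n + 2) = 0 := Nat.choose_eq_zero_of_lt (by omega)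
    rw [hz1, hz2]
    unfold D
    simp
  rw [c2, c1, c0] at sum_eq
  have hne : (((n : ℤ) + 1) * ((n : ℤ) + 2)) ≠ 0 := by positivity
  refine mul_left_cancel₀ hne ?_
  linear_combination sum_eq

/-! ### Schröder recurrence via WZ certificate -/

def Pp (nn kk : ℤ) : ℤ :=
  2 * kk * (40 - 58 * kk + 20 * kk ^ 2 - 2 * kk ^ 3
    + nn * (110 - 149 * kk + 42 * kk ^ 2 - 3 * kk ^ 3)
    + nn ^ 2 * (109 - 136 * kk + 28 * kk ^ 2 - kk ^ 3)
    + nn ^ 3 * (46 - 52 * kk + 6 * kk ^ 2)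
    + nn ^ 4 * (7 - 7 * kk))

def gS (n j : ℕ) : ℤ :=
  Pp (n : ℤ) ((j : ℤ) + 1) * ((n + 2).choose (j + 1) : ℤ) * ((n + 2).choose j : ℤ) * (2 : ℤ) ^ (n + 3 - j)

lemma schroeder_key (nn jj c0 c0p c1 c1p c2 c2p c2pp : ℤ)
    (hA1 : (nn + 1 - jj) * c2 = (nn + 2) * c1)
    (hA2 : (nn + 2 - jj) * c2p = (nn + 2) * c1p)
    (hA3 : (nn - jj) * c1 = (nn + 1) * c0)
    (hA4 : (nn + 1 - jj) * c1p = (nn + 1) * c0p)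
    (hB1 : (jj + 2) * c2pp = (nn + 1 - jj) * c2)
    (hB2 : (jj + 1) * c2 = (nn + 2 - jj) * c2p) :
    (nn + 1) ^ 2 * (nn + 2) ^ 2 * (8 * (nn + 1) * (nn + 3) * (c2 * c2p)
        - 12 * (2 * nn + 3) * (nn + 2) * (c1 * c1p) + 2 * (nn + 1) * (nn + 2) * (c0 * c0p))
      = Pp nn (jj + 2) * c2pp * c2 - 2 * Pp nn (jj + 1) * (c2 * c2p) := by
  unfold Pp
  linear_combination
    (-(-72 - 4 * jj + 4 * jj ^ 2 - 224 * nn - 14 * nn * jj + 6 * nn * jj ^ 2 - 254 * nn ^ 2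
        - 14 * nn ^ 2 * jj + 2 * nn ^ 2 * jj ^ 2 - 124 * nn ^ 3 - 4 * nn ^ 3 * jj - 22 * nn ^ 4)
      * ((nn + 2 - jj) * c2p)) * hA1
    + (-(-72 - 4 * jj + 4 * jj ^ 2 - 224 * nn - 14 * nn * jj + 6 * nn * jj ^ 2 - 254 * nn ^ 2
        - 14 * nn ^ 2 * jj + 2 * nn ^ 2 * jj ^ 2 - 124 * nn ^ 3 - 4 * nn ^ 3 * jj - 22 * nn ^ 4)
      * ((nn + 2) * c1)) * hA2
    + (-(16 + 40 * nn + 36 * nn ^ 2 + 14 * nn ^ 3 + 2 * nn ^ 4) * ((nn + 1 - jj) * c1p)) * hA3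
    + (-(16 + 40 * nn + 36 * nn ^ 2 + 14 * nn ^ 3 + 2 * nn ^ 4) * ((nn + 1) * c0)) * hA4
    + (-(-24 - 4 * jj + 16 * jj ^ 2 - 4 * jj ^ 3 - 88 * nn - 34 * nn * jj + 48 * nn * jj ^ 2
        - 6 * nn * jj ^ 3 - 118 * nn ^ 2 - 72 * nn ^ 2 * jj + 44 * nn ^ 2 * jj ^ 2
        - 2 * nn ^ 2 * jj ^ 3 - 68 * nn ^ 3 - 56 * nn ^ 3 * jj + 12 * nn ^ 3 * jj ^ 2
        - 14 * nn ^ 4 - 14 * nn ^ 4 * jj) * c2) * hB1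
    + (-(-24 + 44 * jj - 24 * jj ^ 2 + 4 * jj ^ 3 - 112 * nn + 162 * nn * jj - 64 * nn * jj ^ 2
        + 6 * nn * jj ^ 3 - 206 * nn ^ 2 + 218 * nn ^ 2 * jj - 54 * nn ^ 2 * jj ^ 2
        + 2 * nn ^ 2 * jj ^ 3 - 186 * nn ^ 3 + 126 * nn ^ 3 * jj - 14 * nn ^ 3 * jj ^ 2
        - 82 * nn ^ 4 + 26 * nn ^ 4 * jj - 14 * nn ^ 5) * c2) * hB2

lemma Tzrec (n : ℕ) : ((n : ℤ) + 1) * ((n : ℤ) + 3) * Tz (n + 2)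
    = 3 * (2 * (n : ℤ) + 3) * ((n : ℤ) + 2) * Tz (n + 1) - ((n : ℤ) + 1) * ((n : ℤ) + 2) * Tz n := by
  have key : ∀ j ∈ Finset.range (n + 2),
      (128 * (((n : ℤ) + 1) ^ 2 * ((n : ℤ) + 2) ^ 2) * (((n : ℤ) + 1) * ((n : ℤ) + 3)))
          * (((n + 2).choose (j + 1) * (n + 2).choose j * 2 ^ (n + 2 - 1 - j) : ℕ) : ℤ)
        + (-(384 * (((n : ℤ) + 1) ^ 2 * ((n : ℤ) + 2) ^ 2) * (2 * (n : ℤ) + 3) * ((n : ℤ) + 2)))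
          * (((n + 1).choose (j + 1) * (n + 1).choose j * 2 ^ (n + 1 - 1 - j) : ℕ) : ℤ)
        + (128 * (((n : ℤ) + 1) ^ 2 * ((n : ℤ) + 2) ^ 2) * (((n : ℤ) + 1) * ((n : ℤ) + 2)))
          * ((n.choose (j + 1) * n.choose j * 2 ^ (n - 1 - j) : ℕ) : ℤ)
      = 8 * gS n (j + 1) - 8 * gS n j := by
    intro j hj
    rw [Finset.mem_range] at hj
    obtain ⟨e, he⟩ : ∃ e, n + 1 = j + e := ⟨n + 1 - j, by omega⟩
    have hA1 := RA (n + 1) (j + 1)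
    have hA2 := RA (n + 1) j
    have hA3 := RA n (j + 1)
    have hA4 := RA n j
    have hB1 := RB (n + 2) (j + 1)
    have hB2 := RB (n + 2) j
    push_cast at hA1 hA2 hA3 hA4 hB1 hB2
    have e1 : n + 1 + 1 = n + 2 := by omega
    rw [e1] at hA1 hA2
    have K := schroeder_key (n : ℤ) (j : ℤ)
      (n.choose (j + 1) : ℤ) (n.choose j : ℤ) ((n + 1).choose (j + 1) : ℤ) ((n + 1).choose j : ℤ)
      ((n + 2).choose (j + 1) : ℤ) ((n + 2).choose j : ℤ) ((n + 2).choose (j + 2) : ℤ)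
      (by linear_combination hA1) (by linear_combination hA2) (by linear_combination hA3)
      (by linear_combination hA4) (by linear_combination hB1) (by linear_combination hB2)
    -- the t-facts
    have f2 : (((n + 2).choose (j + 1) * (n + 2).choose j * 2 ^ (n + 2 - 1 - j) : ℕ) : ℤ)
        = ((n + 2).choose (j + 1) : ℤ) * ((n + 2).choose j : ℤ) * (2 : ℤ) ^ e := by
      have : n + 2 - 1 - j = e := by omega
      rw [this]; push_cast; ring
    have f1 : 4 * (((n + 1).choose (j + 1) * (n + 1).choose j * 2 ^ (n + 1 - 1 - j) : ℕ) : ℤ)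
        = 2 * (((n + 1).choose (j + 1) : ℤ) * ((n + 1).choose j : ℤ) * (2 : ℤ) ^ e) := by
      rcases Nat.eq_zero_or_pos e with he0 | hepos
      · have hj1 : j = n + 1 := by omega
        have hz : (n + 1).choose (j + 1) = 0 := Nat.choose_eq_zero_of_lt (by omega)
        rw [hz]; push_cast; ring
      · obtain ⟨e', rfl⟩ : ∃ e', e = e' + 1 := ⟨e - 1, by omega⟩
        have : n + 1 - 1 - j = e' := by omega
        rw [this]; push_cast; ring
    have f0 : 16 * ((n.choose (j + 1) * n.choose j * 2 ^ (n - 1 - j) : ℕ) : ℤ)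
        = 4 * ((n.choose (j + 1) : ℤ) * (n.choose j : ℤ) * (2 : ℤ) ^ e) := by
      rcases lt_or_ge e 2 with he0 | hepos
      · have hz : n.choose (j + 1) = 0 := Nat.choose_eq_zero_of_lt (by omega)
        rw [hz]; push_cast; ring
      · obtain ⟨e'', rfl⟩ : ∃ e'', e = e'' + 2 := ⟨e - 2, by omega⟩
        have : n - 1 - j = e'' := by omega
        rw [this]; push_cast; ring
    have hg0 : gS n j = 4 * (Pp (n : ℤ) ((j : ℤ) + 1) * (((n + 2).choose (j + 1) : ℤ) * ((n + 2).choose j : ℤ)) * (2 : ℤ) ^ e) := by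
      unfold gS
      have : n + 3 - j = e + 2 := by omega
      rw [this]; ring
    have hg1 : gS n (j + 1) = 2 * (Pp (n : ℤ) ((j : ℤ) + 2) * (((n + 2).choose (j + 2) : ℤ) * ((n + 2).choose (j + 1) : ℤ)) * (2 : ℤ) ^ e) := by
      unfold gS
      have : n + 3 - (j + 1) = e + 1 := by omega
      rw [this]; push_cast; ring
    linear_combination
      (128 * (((n : ℤ) + 1) ^ 2 * ((n : ℤ) + 2) ^ 2) * (((n : ℤ) + 1) * ((n : ℤ) + 3))) * f2
      + (-(96 * (((n : ℤ) + 1) ^ 2 * ((n : ℤ) + 2) ^ 2) * (2 * (n : ℤ) + 3) * ((n : ℤ) + 2))) * f1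
      + (8 * (((n : ℤ) + 1) ^ 2 * ((n : ℤ) + 2) ^ 2) * (((n : ℤ) + 1) * ((n : ℤ) + 2))) * f0
      + (-8) * hg1 + 8 * hg0 + (16 * (2 : ℤ) ^ e) * K
  have tele := Finset.sum_range_sub (fun j => 8 * gS n j) (n + 2)
  have sum_eq : ∑ j ∈ Finset.range (n + 2),
      ((128 * (((n : ℤ) + 1) ^ 2 * ((n : ℤ) + 2) ^ 2) * (((n : ℤ) + 1) * ((n : ℤ) + 3)))
          * (((n + 2).choose (j + 1) * (n + 2).choose j * 2 ^ (n + 2 - 1 - j) : ℕ) : ℤ)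
        + (-(384 * (((n : ℤ) + 1) ^ 2 * ((n : ℤ) + 2) ^ 2) * (2 * (n : ℤ) + 3) * ((n : ℤ) + 2)))
          * (((n + 1).choose (j + 1) * (n + 1).choose j * 2 ^ (n + 1 - 1 - j) : ℕ) : ℤ)
        + (128 * (((n : ℤ) + 1) ^ 2 * ((n : ℤ) + 2) ^ 2) * (((n : ℤ) + 1) * ((n : ℤ) + 2)))
          * ((n.choose (j + 1) * n.choose j * 2 ^ (n - 1 - j) : ℕ) : ℤ))
      = 8 * gS n (n + 2) - 8 * gS n 0 := by
    rw [Finset.sum_congr rfl key]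
    exact tele
  have g0 : gS n 0 = 0 := by
    unfold gS
    have : Pp (n : ℤ) ((0 : ℕ) + 1 : ℤ) = 0 := by push_cast; unfold Pp; ring
    push_cast at this ⊢
    rw [this]; ring
  have gtop : gS n (n + 2) = 0 := by
    have : (n + 2).choose (n + 2 + 1) = 0 := Nat.choose_eq_zero_of_lt (by omega)
    unfold gS
    rw [this]; push_cast; ring
  rw [g0, gtop] at sum_eq
  rw [Finset.sum_add_distrib, Finset.sum_add_distrib, ← Finset.mul_sum, ← Finset.mul_sum,
    ← Finset.mul_sum] at sum_eq
  have c2 : ∑ j ∈ Finset.range (n + 2), (((n + 2).choose (j + 1) * (n + 2).choose j * 2 ^ (n + 2 - 1 - j) : ℕ) : ℤ) = Tz (n + 2) := rfl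
  have c1 : ∑ j ∈ Finset.range (n + 2), (((n + 1).choose (j + 1) * (n + 1).choose j * 2 ^ (n + 1 - 1 - j) : ℕ) : ℤ) = Tz (n + 1) := by
    rw [Finset.sum_range_succ]
    have hz : (n + 1).choose (n + 1 + 1) = 0 := Nat.choose_eq_zero_of_lt (by omega)
    rw [hz]
    simp [Tz]
  have c0 : ∑ j ∈ Finset.range (n + 2), ((n.choose (j + 1) * n.choose j * 2 ^ (n - 1 - j) : ℕ) : ℤ) = Tz n := by
    rw [Finset.sum_range_succ, Finset.sum_range_succ]
    have hz1 : n.choose (n + 1) = 0 := Nat.choose_eq_zero_of_lt (by omega)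
    have hz2 : n.choose (n + 1 + 1) = 0 := Nat.choose_eq_zero_of_lt (by omega)
    rw [hz1, hz2]
    simp [Tz]
  rw [c2, c1, c0] at sum_eq
  have hne : ((128 : ℤ) * (((n : ℤ) + 1) ^ 2 * ((n : ℤ) + 2) ^ 2)) ≠ 0 := by positivity
  refine mul_left_cancel₀ hne ?_
  linear_combination sum_eq

lemma srec (n : ℕ) : ((n : ℤ) + 3) * littleSchroeder (n + 2)
    = 3 * (2 * (n : ℤ) + 3) * littleSchroeder (n + 1) - (n : ℤ) * littleSchroeder n := by
  have hT := Tzrec n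
  have hm2 := schroeder_mul (n + 2)
  have hm1 := schroeder_mul (n + 1)
  have hm0 := schroeder_mul n
  push_cast at hm2 hm1 hm0
  have hne : (((n : ℤ) + 1) * ((n : ℤ) + 2)) ≠ 0 := by positivity
  refine mul_left_cancel₀ hne ?_
  linear_combination hT + (((n : ℤ) + 1) * ((n : ℤ) + 3)) * hm2
    + (-(3 * (2 * (n : ℤ) + 3) * ((n : ℤ) + 2))) * hm1
    + (((n : ℤ) + 1) * ((n : ℤ) + 2)) * hm0

/-! ### Main theorem -/

lemma mainAux (m : ℕ) :
    3 * ∑ k ∈ Finset.Icc 1 (m + 1), (-1 : ℤ) ^ (m + 1 - k) * (4 * k ^ 2 + 2 * k - 1) * D (k - 1) * littleSchroeder k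
      = ((m : ℤ) + 1) * (((m : ℤ) + 2) * D (m + 1) * littleSchroeder (m + 1)
        + ((m : ℤ) + 3) * D m * littleSchroeder (m + 2)) := by
  induction m with
  | zero =>
    have hD0 : D 0 = 1 := by simp [D]
    have hD1 : D 1 = 3 := by
      unfold D
      rw [Finset.sum_range_succ, Finset.sum_range_succ, Finset.sum_range_zero]
      norm_num
    have hs1 : littleSchroeder 1 = 1 := by
      unfold littleSchroeder
      rw [Finset.Icc_self, Finset.sum_singleton]
      norm_num
    have hs2 : littleSchroeder 2 = 3 := by
      unfold littleSchroeder
      rw [show Finset.Icc 1 2 = {1, 2} from rfl]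
      rw [Finset.sum_insert (by decide), Finset.sum_singleton]
      norm_num
    rw [Finset.Icc_self, Finset.sum_singleton]
    norm_num [hD0, hD1, hs1, hs2]
  | succ m ih =>
    have hflip : ∀ k ∈ Finset.Icc 1 (m + 1),
        (-1 : ℤ) ^ (m + 1 + 1 - k) * (4 * k ^ 2 + 2 * k - 1) * D (k - 1) * littleSchroeder k
          = -((-1 : ℤ) ^ (m + 1 - k) * (4 * k ^ 2 + 2 * k - 1) * D (k - 1) * littleSchroeder k) := by
      intro k hk
      rw [Finset.mem_Icc] at hk
      have : m + 1 + 1 - k = (m + 1 - k) + 1 := by omega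
      rw [this, pow_succ]
      ring
    rw [Finset.sum_Icc_succ_top (by omega : 1 ≤ m + 1 + 1)]
    rw [Finset.sum_congr rfl hflip, Finset.sum_neg_distrib]
    have htop : m + 1 + 1 - (m + 1 + 1) = 0 := by omega
    rw [htop]
    have htop2 : m + 1 + 1 - 1 = m + 1 := by omega
    rw [htop2]
    have hD := Drec m
    have hs := srec (m + 1)
    push_cast at hs ⊢
    linear_combination (-1 : ℤ) * ih
    - (((m : ℤ) + 3) * littleSchroeder (m + 2)) * hD
    - (((m : ℤ) + 2) * D (m + 1)) * hs

theorem stmt6 (n : ℕ) (hn : 0 < n) :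
    3 * ∑ k ∈ Finset.Icc 1 n, (-1 : ℤ) ^ (n - k) * (4 * k ^ 2 + 2 * k - 1) * D (k - 1) * littleSchroeder k
      = n * (((n : ℤ) + 1) * D n * littleSchroeder n + ((n : ℤ) + 2) * D (n - 1) * littleSchroeder (n + 1)) := by
  obtain ⟨m, rfl⟩ : ∃ m, n = m + 1 := ⟨n - 1, by omega⟩
  have h := mainAux m
  simp only [Nat.add_sub_cancel]
  push_cast
  linear_combination h
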